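/- The class GPVAL is closed under composition: if I ⊆ ℝ^d is open and connected, J ⊆ ℝ^e is open and connected, g : I → ℝ^e belongs to GPVAL with g(I) ⊆ J, and f : J → ℝ^m belongs to GPVAL, then the composition f ∘ g : I → ℝ^m belongs to GPVAL. -/

import Mathlib

noncomputable section

/-- The continuous linear map `ℝ^d → ℝ^n` associated to an `n × d` real matrix. -/
def matLin {n d : ℕ} (M : Matrix (Fin n) (Fin d) ℝ) : (Fin d → ℝ) →L[ℝ] (Fin n → ℝ) :=
  LinearMap.toContinuousLinearMap (Matrix.toLin' M)

/-- The class `GPVAL` of polynomially bounded generable functions on `I`. -/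
def GPVAL {d e : ℕ} (I : Set (Fin d → ℝ)) (f : (Fin d → ℝ) → (Fin e → ℝ)) : Prop :=
  ∃ (sp : Polynomial ℝ) (n : ℕ) (hn : e ≤ n)
    (p : Matrix (Fin n) (Fin d) (MvPolynomial (Fin n) ℝ))
    (x₀ : Fin d → ℝ) (y₀ : Fin n → ℝ) (y : (Fin d → ℝ) → (Fin n → ℝ)),
    (∀ a : ℝ, 0 ≤ a → 0 ≤ sp.eval a) ∧
    x₀ ∈ I ∧ y x₀ = y₀ ∧
    (∀ x ∈ I, HasFDerivAt y (matLin (fun i j => MvPolynomial.eval (y x) (p i j))) x) ∧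
    (∀ x ∈ I, ∀ i : Fin e, f x i = y x (Fin.castLE hn i)) ∧
    (∀ x ∈ I, ‖y x‖ ≤ sp.eval ‖x‖)

def pabs (r : Polynomial ℝ) : Polynomial ℝ :=
  ∑ i ∈ r.support, Polynomial.C |r.coeff i| * Polynomial.X ^ i

lemma pabs_eval (r : Polynomial ℝ) (s : ℝ) :
    (pabs r).eval s = ∑ i ∈ r.support, |r.coeff i| * s ^ i := by
  simp [pabs, Polynomial.eval_finset_sum]

lemma pabs_nonneg (r : Polynomial ℝ) {s : ℝ} (hs : 0 ≤ s) : 0 ≤ (pabs r).eval s := by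
  rw [pabs_eval]
  exact Finset.sum_nonneg fun i _ => mul_nonneg (abs_nonneg _) (pow_nonneg hs _)

lemma eval_le_pabs (r : Polynomial ℝ) {t s : ℝ} (ht : 0 ≤ t) (hts : t ≤ s) :
    r.eval t ≤ (pabs r).eval s := by
  rw [pabs_eval, Polynomial.eval_eq_sum, Polynomial.sum_def]
  refine Finset.sum_le_sum fun i _ => ?_
  calc r.coeff i * t ^ i ≤ |r.coeff i| * t ^ i :=
        mul_le_mul_of_nonneg_right (le_abs_self _) (pow_nonneg ht i)
    _ ≤ |r.coeff i| * s ^ i :=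
        mul_le_mul_of_nonneg_left (pow_le_pow_left₀ ht hts i) (abs_nonneg _)

lemma matLin_apply {n d : ℕ} (M : Fin n → Fin d → ℝ) (v : Fin d → ℝ) (i : Fin n) :
    matLin M v i = ∑ j, M i j * v j := by
  rfl

/-- **`GPVAL` is closed under composition**: if `g ∈ GPVAL` on `I` with `g(I) ⊆ J` and
`f ∈ GPVAL` on `J`, then `f ∘ g ∈ GPVAL` on `I`. -/
theorem gpval_comp {d e m : ℕ} (I : Set (Fin d → ℝ)) (J : Set (Fin e → ℝ))
    (hIopen : IsOpen I) (hIconn : IsConnected I)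
    (hJopen : IsOpen J) (hJconn : IsConnected J)
    (g : (Fin d → ℝ) → (Fin e → ℝ)) (f : (Fin e → ℝ) → (Fin m → ℝ))
    (hg : GPVAL I g) (hgJ : ∀ x ∈ I, g x ∈ J) (hf : GPVAL J f) :
    GPVAL I (f ∘ g) := by
  obtain ⟨sp, n, hn, p, x₀, y₀, y, hsp, hx₀, -, hyd, hgy, hybd⟩ := hg
  obtain ⟨sq, N, hm, q, u₀, z₀, z, hsq, -, -, hzd, hfz, hzbd⟩ := hf
  have hn' : m ≤ N + n := hm.trans (Nat.le_add_right N n)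
  -- combined system
  set Y : (Fin d → ℝ) → (Fin (N + n) → ℝ) := fun x => Fin.append (z (g x)) (y x) with hY
  have hcomp1 : ∀ x, (Y x) ∘ Fin.castAdd n = z (g x) := fun x =>
    funext fun i => Fin.append_left _ _ i
  have hcomp2 : ∀ x, (Y x) ∘ Fin.natAdd N = y x := fun x =>
    funext fun i => Fin.append_right _ _ i
  -- projection onto the first e coordinates (of the y-system)
  set π : (Fin n → ℝ) →L[ℝ] (Fin e → ℝ) :=
    ContinuousLinearMap.pi (fun i => ContinuousLinearMap.proj (Fin.castLE hn i)) with hπ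
  -- combined polynomial matrix
  set P : Fin (N + n) → Fin d → MvPolynomial (Fin (N + n)) ℝ :=
    Matrix.of (Fin.addCases
      (fun a j => ∑ k : Fin e,
        MvPolynomial.rename (Fin.castAdd n) (q a k) *
          MvPolynomial.rename (Fin.natAdd N) (p (Fin.castLE hn k) j))
      (fun b j => MvPolynomial.rename (Fin.natAdd N) (p b j))) with hP
  refine ⟨(pabs sq).comp (pabs sp) + pabs sp, N + n, hn', P, x₀, Y x₀, Y, ?_, hx₀, rfl,
    ?_, ?_, ?_⟩
  · intro a ha
    rw [Polynomial.eval_add, Polynomial.eval_comp]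
    exact add_nonneg (pabs_nonneg _ (pabs_nonneg _ ha)) (pabs_nonneg _ ha)
  · -- the derivative
    intro x hx
    have hgd : HasFDerivAt g
        (π.comp (matLin (fun i j => MvPolynomial.eval (y x) (p i j)))) x := by
      refine ((π.hasFDerivAt).comp x (hyd x hx)).congr_of_eventuallyEq ?_
      filter_upwards [hIopen.mem_nhds hx] with x' hx'
      funext i
      simpa [π] using hgy x' hx' i
    have hzg : HasFDerivAt (fun x => z (g x))
        ((matLin (fun i j => MvPolynomial.eval (z (g x)) (q i j))).comp
          (π.comp (matLin (fun i j => MvPolynomial.eval (y x) (p i j))))) x :=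
      (hzd (g x) (hgJ x hx)).comp x hgd
    apply hasFDerivAt_pi''
    intro i
    induction i using Fin.addCases with
    | left a =>
      have h1 := hasFDerivAt_pi'.1 hzg a
      convert h1 using 1
      · funext x'
        simp [Y, Fin.append_left]
      · ext v
        simp only [ContinuousLinearMap.comp_apply, ContinuousLinearMap.proj_apply,
          matLin_apply, hπ, ContinuousLinearMap.pi_apply]
        have : ∀ j, MvPolynomial.eval (Y x) (P (Fin.castAdd n a) j) =
            ∑ k : Fin e, MvPolynomial.eval (z (g x)) (q a k) *
              MvPolynomial.eval (y x) (p (Fin.castLE hn k) j) := by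
          intro j
          simp [hP, Fin.addCases_left, map_sum, MvPolynomial.eval_rename, hcomp1, hcomp2]
        simp only [this]
        simp only [Finset.sum_mul, Finset.mul_sum, mul_assoc]
        exact Finset.sum_comm
    | right b =>
      have h1 := hasFDerivAt_pi'.1 (hyd x hx) b
      convert h1 using 1
      · funext x'
        simp [Y, Fin.append_right]
      · ext v
        simp only [ContinuousLinearMap.comp_apply, ContinuousLinearMap.proj_apply,
          matLin_apply]
        refine Finset.sum_congr rfl fun j _ => ?_
        congr 1
        simp [hP, Fin.addCases_right, MvPolynomial.eval_rename, hcomp2]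
  · -- components
    intro x hx i
    have : Fin.castLE hn' i = Fin.castAdd n (Fin.castLE hm i) := rfl
    rw [this]
    show f (g x) i = Y x _
    rw [hfz (g x) (hgJ x hx) i]
    exact (Fin.append_left _ _ _).symm
  · -- the bound
    intro x hx
    have hgle : ‖g x‖ ≤ ‖y x‖ := by
      refine (pi_norm_le_iff_of_nonneg (norm_nonneg _)).2 fun i => ?_
      rw [hgy x hx i]
      exact norm_le_pi_norm (y x) _
    have hyle : ‖y x‖ ≤ (pabs sp).eval ‖x‖ :=
      (hybd x hx).trans (eval_le_pabs sp (norm_nonneg x) le_rfl)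
    have hzle : ‖z (g x)‖ ≤ (pabs sq).eval ((pabs sp).eval ‖x‖) :=
      (hzbd (g x) (hgJ x hx)).trans
        (eval_le_pabs sq (norm_nonneg _) (hgle.trans hyle))
    have h1 : 0 ≤ (pabs sp).eval ‖x‖ := pabs_nonneg _ (norm_nonneg x)
    have h2 : 0 ≤ (pabs sq).eval ((pabs sp).eval ‖x‖) := pabs_nonneg _ h1
    rw [Polynomial.eval_add, Polynomial.eval_comp]
    refine (pi_norm_le_iff_of_nonneg (add_nonneg h2 h1)).2 fun i => ?_
    induction i using Fin.addCases with
    | left a =>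
      have : Y x (Fin.castAdd n a) = z (g x) a := Fin.append_left _ _ _
      rw [this]
      calc |z (g x) a| ≤ ‖z (g x)‖ := norm_le_pi_norm (z (g x)) a
        _ ≤ _ := hzle
        _ ≤ _ := le_add_of_nonneg_right h1
    | right b =>
      have : Y x (Fin.natAdd N b) = y x b := Fin.append_right _ _ _
      rw [this]
      calc |y x b| ≤ ‖y x‖ := norm_le_pi_norm (y x) b
        _ ≤ _ := hyle
        _ ≤ _ := le_add_of_nonneg_left h2
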